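/- arXiv:2003.04923 — 3 statements merged into one kernel-verified Lean document; each statement's English description precedes it below -/
import Mathlib

section
/- Let R, ω₀ ∈ ℝ, L ∈ ℝ with L ≠ 0, c ∈ ℝ, and set θ₀(t) = ω₀·t + c. Let i, u : ℝ → ℝ³ with i differentiable, satisfying for all t the RL-line equation L·i'(t) = −R·i(t) + u(t) (componentwise). Define I(t) = T(θ₀(t))·i(t) and U(t) = T(θ₀(t))·u(t). Then I is differentiable and for all t: L·I'(t) = −R·I(t) + ω₀·L·J̃·I(t) + U(t), where J̃ = [[0,1,0],[−1,0,0],[0,0,0]]. (This is the synchronous DQ-frame representation of the power-line dynamics.) -/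
open Real Matrix

/-- The Park transformation matrix. -/
noncomputable def Park (θ : ℝ) : Matrix (Fin 3) (Fin 3) ℝ :=
  Real.sqrt (2/3) •
    !![Real.sin θ, Real.sin (θ - 2*π/3), Real.sin (θ + 2*π/3);
       Real.cos θ, Real.cos (θ - 2*π/3), Real.cos (θ + 2*π/3);
       1/Real.sqrt 2, 1/Real.sqrt 2, 1/Real.sqrt 2]

/-- The 3×3 matrix J̃ = [[0,1,0],[−1,0,0],[0,0,0]]. -/
def J3 : Matrix (Fin 3) (Fin 3) ℝ :=
  !![0, 1, 0; -1, 0, 0; 0, 0, 0]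

lemma park_deriv (ω₀ c t : ℝ) (j k : Fin 3) :
    HasDerivAt (fun s => Park (ω₀*s+c) j k)
      (ω₀ * ((J3 * Park (ω₀*t+c)) j k)) t := by
  have hθ : HasDerivAt (fun s => ω₀*s+c) ω₀ t := by
    simpa using ((hasDerivAt_id t).const_mul ω₀).add_const c
  fin_cases j <;> fin_cases k <;>
    simp only [Park, J3, Matrix.smul_apply, Matrix.mul_apply, Fin.sum_univ_three,
      Matrix.cons_val', Matrix.cons_val_zero, Matrix.cons_val_one, Matrix.head_cons,
      Matrix.empty_val', Matrix.cons_val_fin_one, Matrix.head_fin_const,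
      Matrix.cons_val_two, Matrix.tail_cons, smul_eq_mul, Fin.isValue]
  · exact (hθ.sin.const_mul _).congr_deriv (by norm_num [Matrix.cons_val_two]; ring)
  · exact ((hθ.sub_const _).sin.const_mul _).congr_deriv (by norm_num [Matrix.cons_val_two]; ring)
  · exact ((hθ.add_const _).sin.const_mul _).congr_deriv (by norm_num [Matrix.cons_val_two]; ring)
  · exact (hθ.cos.const_mul _).congr_deriv (by norm_num [Matrix.cons_val_two]; ring)
  · exact ((hθ.sub_const _).cos.const_mul _).congr_deriv (by norm_num [Matrix.cons_val_two]; ring)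
  · exact ((hθ.add_const _).cos.const_mul _).congr_deriv (by norm_num [Matrix.cons_val_two]; ring)
  · exact (hasDerivAt_const t (Real.sqrt (2/3) * (1/Real.sqrt 2))).congr_deriv (by norm_num [Matrix.cons_val_two])
  · exact (hasDerivAt_const t (Real.sqrt (2/3) * (1/Real.sqrt 2))).congr_deriv (by norm_num [Matrix.cons_val_two])
  · exact (hasDerivAt_const t (Real.sqrt (2/3) * (1/Real.sqrt 2))).congr_deriv (by norm_num [Matrix.cons_val_two])

/-- Synchronous DQ-frame representation of RL power-line dynamics:
if `L i' = -R i + u` componentwise, then the Park-transformed current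
`I t = T(ω₀ t + c) i t` satisfies `L I' = -R I + ω₀ L J̃ I + U`. -/
theorem line_dynamics_DQ_frame (R ω₀ L c : ℝ) (hL : L ≠ 0)
    (i i' u : ℝ → Fin 3 → ℝ)
    (hdiff : ∀ t j, HasDerivAt (fun s => i s j) (i' t j) t)
    (hline : ∀ t j, L * i' t j = -R * i t j + u t j) :
    ∀ t : ℝ, ∃ I' : Fin 3 → ℝ,
      (∀ j, HasDerivAt (fun s => (Park (ω₀ * s + c)).mulVec (i s) j) (I' j) t) ∧
      ∀ j, L * I' j =
        -R * (Park (ω₀ * t + c)).mulVec (i t) j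
          + ω₀ * L * (J3.mulVec ((Park (ω₀ * t + c)).mulVec (i t))) j
          + (Park (ω₀ * t + c)).mulVec (u t) j := by
  intro t
  refine ⟨fun j => ω₀ * (J3.mulVec ((Park (ω₀ * t + c)).mulVec (i t))) j
      + (Park (ω₀ * t + c)).mulVec (i' t) j, ?_, ?_⟩
  · intro j
    have hsum : HasDerivAt (fun s => ∑ k : Fin 3, Park (ω₀*s+c) j k * i s k)
        (∑ k : Fin 3, (ω₀ * ((J3 * Park (ω₀*t+c)) j k) * i t k
          + Park (ω₀*t+c) j k * i' t k)) t :=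
      HasDerivAt.fun_sum (fun k _ => (park_deriv ω₀ c t j k).mul (hdiff t k))
    have heq : (fun s => (Park (ω₀ * s + c)).mulVec (i s) j)
        = fun s => ∑ k : Fin 3, Park (ω₀*s+c) j k * i s k := by
      funext s; simp [Matrix.mulVec, dotProduct]
    rw [heq]
    convert hsum using 1
    simp only [Matrix.mulVec, dotProduct, Matrix.mul_apply, Fin.sum_univ_three]
    ring
  · intro j
    have h0 := hline t 0; have h1 := hline t 1; have h2 := hline t 2
    simp only [Matrix.mulVec, dotProduct, Fin.sum_univ_three]
    linear_combination Park (ω₀*t+c) j 0 * h0 + Park (ω₀*t+c) j 1 * h1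
      + Park (ω₀*t+c) j 2 * h2
end

section
/- Let R_f ∈ ℝ, L_f ∈ ℝ with L_f ≠ 0, and let θ : ℝ → ℝ be differentiable with θ'(t) = ω(t). Let i, v, v_o : ℝ → ℝ³ with i differentiable, satisfying for all t the LC-filter inductor equation L_f·i'(t) = −R_f·i(t) + v(t) − v_o(t). Define i_dq0(t) = T(θ(t))·i(t), v_dq0(t) = T(θ(t))·v(t), v_o,dq0(t) = T(θ(t))·v_o(t). Then i_dq0 is differentiable and for all t: L_f·i_dq0'(t) = ω(t)·L_f·J̃·i_dq0(t) − R_f·i_dq0(t) + v_dq0(t) − v_o,dq0(t), where J̃ = [[0,1,0],[−1,0,0],[0,0,0]]. (This is the local dq-frame representation of the inverter filter inductor dynamics.) -/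
open Real Matrix

lemma fin3_mk_two : (⟨2, by norm_num⟩ : Fin 3) = 2 := rfl

lemma park_entry_deriv (θ ω : ℝ → ℝ) (hθ : ∀ t, HasDerivAt θ (ω t) t)
    (t : ℝ) (j k : Fin 3) :
    HasDerivAt (fun s => Park (θ s) j k) (ω t * (J3 * Park (θ t)) j k) t := by
  have hs := (hθ t).sin
  have hc := (hθ t).cos
  have hsm := ((hθ t).sub_const (2*π/3)).sin
  have hcm := ((hθ t).sub_const (2*π/3)).cos
  have hsp := ((hθ t).add_const (2*π/3)).sin
  have hcp := ((hθ t).add_const (2*π/3)).cos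
  fin_cases j <;> fin_cases k <;>
    simp only [Park, J3, Matrix.mul_apply, Matrix.smul_apply, Matrix.of_apply,
      Matrix.cons_val', Matrix.cons_val_zero, Matrix.cons_val_one, Matrix.head_cons,
      Matrix.empty_val', Matrix.cons_val_fin_one, Fin.sum_univ_three, smul_eq_mul,
      Fin.isValue, Matrix.cons_val_two, Matrix.tail_cons,
      Fin.mk_zero, Fin.mk_one, fin3_mk_two] <;>
    [ (exact (hs.const_mul (Real.sqrt (2/3))).congr_deriv (by ring));
      (exact (hsm.const_mul (Real.sqrt (2/3))).congr_deriv (by ring));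
      (exact (hsp.const_mul (Real.sqrt (2/3))).congr_deriv (by ring));
      (exact (hc.const_mul (Real.sqrt (2/3))).congr_deriv (by ring));
      (exact (hcm.const_mul (Real.sqrt (2/3))).congr_deriv (by ring));
      (exact (hcp.const_mul (Real.sqrt (2/3))).congr_deriv (by ring));
      (exact (hasDerivAt_const t (Real.sqrt (2/3) * (1/Real.sqrt 2))).congr_deriv (by simp [Matrix.vecHead]));
      (exact (hasDerivAt_const t (Real.sqrt (2/3) * (1/Real.sqrt 2))).congr_deriv (by simp [Matrix.vecHead]));
      (exact (hasDerivAt_const t (Real.sqrt (2/3) * (1/Real.sqrt 2))).congr_deriv (by simp [Matrix.vecHead]))]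

/-- Local dq-frame representation of the inverter LC-filter inductor dynamics:
if `L_f i' = -R_f i + v - v_o` componentwise and `θ' = ω`, then the Park-transformed
current `i_dq0 t = T(θ t) i t` satisfies
`L_f i_dq0' = ω L_f J̃ i_dq0 - R_f i_dq0 + v_dq0 - v_o_dq0`. -/
theorem filter_dynamics_dq_frame (Rf Lf : ℝ) (hLf : Lf ≠ 0)
    (θ ω : ℝ → ℝ) (hθ : ∀ t, HasDerivAt θ (ω t) t)
    (i i' v vo : ℝ → Fin 3 → ℝ)
    (hdiff : ∀ t j, HasDerivAt (fun s => i s j) (i' t j) t)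
    (hfilter : ∀ t j, Lf * i' t j = -Rf * i t j + v t j - vo t j) :
    ∀ t : ℝ, ∃ idq' : Fin 3 → ℝ,
      (∀ j, HasDerivAt (fun s => (Park (θ s)).mulVec (i s) j) (idq' j) t) ∧
      ∀ j, Lf * idq' j =
        ω t * Lf * (J3.mulVec ((Park (θ t)).mulVec (i t))) j
          - Rf * (Park (θ t)).mulVec (i t) j
          + (Park (θ t)).mulVec (v t) j
          - (Park (θ t)).mulVec (vo t) j := by
  
  intro t
  refine ⟨fun j => ω t * (J3.mulVec ((Park (θ t)).mulVec (i t))) j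
      + (Park (θ t)).mulVec (i' t) j, ?_, ?_⟩
  · intro j
    have hsum : HasDerivAt (fun s => ∑ k, Park (θ s) j k * i s k)
        (∑ k, (ω t * (J3 * Park (θ t)) j k * i t k + Park (θ t) j k * i' t k)) t := by
      refine HasDerivAt.fun_sum fun k _ => ?_
      have := (park_entry_deriv θ ω hθ t j k).fun_mul (hdiff t k)
      convert this using 1
      try ring
    have hfun : (fun s => (Park (θ s)).mulVec (i s) j)
        = fun s => ∑ k, Park (θ s) j k * i s k := by
      funext s; simp [Matrix.mulVec, dotProduct]
    have key : ω t * (J3.mulVec ((Park (θ t)).mulVec (i t))) j + (Park (θ t)).mulVec (i' t) j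
        = ∑ k, (ω t * (J3 * Park (θ t)) j k * i t k + Park (θ t) j k * i' t k) := by
      rw [Matrix.mulVec_mulVec]
      simp only [Matrix.mulVec, dotProduct, Matrix.mul_apply, Fin.sum_univ_three]
      ring
    show HasDerivAt _ (ω t * (J3.mulVec ((Park (θ t)).mulVec (i t))) j
        + (Park (θ t)).mulVec (i' t) j) t
    rw [hfun, key]
    exact hsum
  · intro j
    have h0 := hfilter t 0
    have h1 := hfilter t 1
    have h2 := hfilter t 2
    show Lf * (ω t * (J3.mulVec ((Park (θ t)).mulVec (i t))) j + (Park (θ t)).mulVec (i' t) j) = _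
    simp only [Matrix.mulVec, dotProduct, Fin.sum_univ_three]
    linear_combination Park (θ t) j 0 * h0 + Park (θ t) j 1 * h1 + Park (θ t) j 2 * h2
end

section
/- Let R, X, L ∈ ℝ with R² + X² ≠ 0, and let V_i, V_k, δ_i, δ_k, a_i, a_k, b_i, b_k ∈ ℝ (a_i, a_k playing the role of the voltage-magnitude derivatives V̇_i, V̇_k and b_i, b_k of the angle derivatives δ̇_i, δ̇_k). Set G = R/(R²+X²), B = X/(R²+X²), G' = (R²−X²)·L/(R²+X²)², B' = 2·R·X·L/(R²+X²)², I⁰ = (V_i·e^{iδ_i} − V_k·e^{iδ_k})/(R + i·X), and I¹ = I⁰ − (L/(R+i·X)²)·[(a_i + i·V_i·b_i)·e^{iδ_i} − (a_k + i·V_k·b_k)·e^{iδ_k}]. Then, writing δ = δ_i − δ_k, the complex power S¹ = conj(I¹)·V_i·e^{iδ_i} satisfies: Re S¹ = [G·V_i² − G·V_i·V_k·cos δ + B·V_i·V_k·sin δ] − G'·V_i·a_i + G'·V_i·a_k·cos δ + G'·V_i·V_k·b_k·sin δ − B'·V_i²·b_i − B'·V_i·a_k·sin δ + B'·V_i·V_k·b_k·cos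 δ, and Im S¹ = [B·V_i² − B·V_i·V_k·cos δ − G·V_i·V_k·sin δ] + G'·V_i²·b_i + G'·V_i·a_k·sin δ − G'·V_i·V_k·b_k·cos δ − B'·V_i·a_i + B'·V_i·a_k·cos δ + B'·V_i·V_k·b_k·sin δ. (These are the first-order active and reactive power flows P¹_{ik}, Q¹_{ik} used by the high-fidelity 3rd-order microgrid model.) -/
open Complex

set_option maxHeartbeats 4000000 in
theorem first_order_power_flow (R X L : ℝ) (hRX : R^2 + X^2 ≠ 0)
    (Vi Vk δi δk ai ak bi bk : ℝ) :
    let G : ℝ := R / (R^2 + X^2)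
    let B : ℝ := X / (R^2 + X^2)
    let G' : ℝ := (R^2 - X^2) * L / (R^2 + X^2)^2
    let B' : ℝ := 2 * R * X * L / (R^2 + X^2)^2
    let I0 : ℂ := ((Vi : ℂ) * Complex.exp (Complex.I * δi)
        - (Vk : ℂ) * Complex.exp (Complex.I * δk)) / ((R : ℂ) + Complex.I * X)
    let I1 : ℂ := I0 - ((L : ℂ) / ((R : ℂ) + Complex.I * X)^2) *
        (((ai : ℂ) + Complex.I * Vi * bi) * Complex.exp (Complex.I * δi)
          - ((ak : ℂ) + Complex.I * Vk * bk) * Complex.exp (Complex.I * δk))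
    let δ : ℝ := δi - δk
    let S1 : ℂ := (starRingEnd ℂ) I1 * ((Vi : ℂ) * Complex.exp (Complex.I * δi))
    S1.re = (G * Vi^2 - G * Vi * Vk * Real.cos δ + B * Vi * Vk * Real.sin δ)
        - G' * Vi * ai + G' * Vi * ak * Real.cos δ
        + G' * Vi * Vk * bk * Real.sin δ - B' * Vi^2 * bi
        - B' * Vi * ak * Real.sin δ + B' * Vi * Vk * bk * Real.cos δ ∧
    S1.im = (B * Vi^2 - B * Vi * Vk * Real.cos δ - G * Vi * Vk * Real.sin δ)
        + G' * Vi^2 * bi + G' * Vi * ak * Real.sin δ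
        - G' * Vi * Vk * bk * Real.cos δ - B' * Vi * ai
        + B' * Vi * ak * Real.cos δ + B' * Vi * Vk * bk * Real.sin δ := by
  intro G B G' B' I0 I1 δ S1
  have h2 : ((R:ℂ) + Complex.I * X) ≠ 0 := by
    intro h
    apply hRX
    have hr : R = 0 := by simpa using congrArg Complex.re h
    have hi : X = 0 := by simpa using congrArg Complex.im h
    simp [hr, hi]
  have hS : S1 = (Vi:ℂ) * (starRingEnd ℂ) (I1 * Complex.exp (-(Complex.I * δi))) := by
    have hc : (starRingEnd ℂ) (Complex.exp (-(Complex.I * δi))) = Complex.exp (Complex.I * δi) := by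
      rw [← Complex.exp_conj]
      simp [Complex.conj_ofReal]
    simp only [S1, map_mul, hc]
    ring
  have e1 : Complex.exp (Complex.I*δi) * Complex.exp (-(Complex.I*δi)) = 1 := by
    rw [← Complex.exp_add]; simp
  have e2 : Complex.exp (Complex.I*δk) * Complex.exp (-(Complex.I*δi))
      = Complex.exp (-(Complex.I * ((δ:ℝ):ℂ))) := by
    rw [← Complex.exp_add]; congr 1; simp only [δ]; push_cast; ring
  have hI1 : I1 * Complex.exp (-(Complex.I * δi)) =
      ((Vi:ℂ) - Vk * Complex.exp (-(Complex.I * ((δ:ℝ):ℂ)))) / ((R:ℂ) + Complex.I*X)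
      - ((L:ℂ)/((R:ℂ)+Complex.I*X)^2) * (((ai:ℂ) + Complex.I*Vi*bi)
          - ((ak:ℂ) + Complex.I*Vk*bk) * Complex.exp (-(Complex.I * ((δ:ℝ):ℂ)))) := by
    simp only [I1, I0]
    linear_combination ((Vi:ℂ)/((R:ℂ)+Complex.I*X)
        - ((L:ℂ)/((R:ℂ)+Complex.I*X)^2) * ((ai:ℂ) + Complex.I*Vi*bi)) * e1
      + (-(Vk:ℂ)/((R:ℂ)+Complex.I*X)
        + ((L:ℂ)/((R:ℂ)+Complex.I*X)^2) * ((ak:ℂ) + Complex.I*Vk*bk)) * e2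
  have hex : Complex.exp (-(Complex.I * ((δ:ℝ):ℂ)))
      = ((Real.cos δ : ℝ) : ℂ) - ((Real.sin δ : ℝ) : ℂ) * Complex.I := by
    rw [show -(Complex.I * ((δ:ℝ):ℂ)) = (((-δ : ℝ)) : ℂ) * Complex.I by push_cast; ring]
    rw [Complex.exp_mul_I, ← Complex.ofReal_cos, ← Complex.ofReal_sin, Real.cos_neg, Real.sin_neg]
    push_cast
    ring
  rw [hS, hI1, hex]
  simp only [G, B, G', B']
  generalize Real.cos δ = c
  generalize Real.sin δ = s
  simp only [map_sub, map_div₀, map_mul, map_add, map_pow, Complex.conj_ofReal, Complex.conj_I]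
  constructor <;>
  · simp only [pow_two, Complex.div_re, Complex.div_im, Complex.normSq_apply, Complex.add_re,
      Complex.add_im, Complex.mul_re, Complex.mul_im, Complex.sub_re, Complex.sub_im,
      Complex.neg_re, Complex.neg_im, Complex.ofReal_re, Complex.ofReal_im,
      Complex.I_re, Complex.I_im]
    have hRX' : R * R + X * X ≠ 0 := by rwa [← pow_two, ← pow_two]
    norm_num
    rw [show (R * R - X * X) * (R * R - X * X) + (-(R * X) + -(X * R)) * (-(R * X) + -(X * R))
      = (R * R + X * X) * (R * R + X * X) by ring]
    field_simp
    ring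
end
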